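/- Let K = (K, ≤, M) be a countable rooted Kripke model in a language σ. Then there is an onto function f : Γ* → K such that: (1) K' = (Γ*, ⪯, M') is a Kripke model, where M'_x := M_{f(x)} for every x ∈ Γ*; and (2) for every node k ∈ K, every σ(M_k)-sentence φ, and every x ∈ Γ* with f(x) = k, x forces φ in K' if and only if k forces φ in K. -/

import Mathlib

/- Kripke models for intuitionistic first-order logic over an arbitrary
language, and the transformation of a countable rooted Kripke model onto the
full infinite binary tree (finite binary strings ordered by prefix). -/

namespace Pap18

/-- A first-order language: function and relation symbols of each arity. -/
structure Lang where
  Func : ℕ → Type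
  Rel : ℕ → Type

/-- Terms over the language `σ` with extra constants from `C` (de Bruijn
variables). -/
inductive GTerm (σ : Lang) (C : Type) : Type
  | var : ℕ → GTerm σ C
  | const : C → GTerm σ C
  | func : {n : ℕ} → σ.Func n → (Fin n → GTerm σ C) → GTerm σ C

/-- First-order formulas over `σ` with constants from `C`. -/
inductive GFormula (σ : Lang) (C : Type) : Type
  | falsum : GFormula σ C
  | eq : GTerm σ C → GTerm σ C → GFormula σ C
  | rel : {n : ℕ} → σ.Rel n → (Fin n → GTerm σ C) → GFormula σ C
  | conj : GFormula σ C → GFormula σ C → GFormula σ C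
  | disj : GFormula σ C → GFormula σ C → GFormula σ C
  | impl : GFormula σ C → GFormula σ C → GFormula σ C
  | all : GFormula σ C → GFormula σ C
  | ex : GFormula σ C → GFormula σ C

variable {σ : Lang} {C : Type} {W : Type} {le : W → W → Prop}

def vcons {α : Type*} (a : α) (v : ℕ → α) : ℕ → α
  | 0 => a
  | n + 1 => v n

/-- A Kripke model for the language `σ(C)` on the partially ordered frame
`(W, le)`: each node carries a classical structure, and these grow along the
order (substructures, via injective embeddings commuting with all the
interpretations). -/
structure GKripke (σ : Lang) (C W : Type) (le : W → W → Prop) where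
  ne : Nonempty W
  le_refl : ∀ w, le w w
  le_trans : ∀ {a b c}, le a b → le b c → le a c
  le_antisymm : ∀ {a b}, le a b → le b a → a = b
  dom : W → Type
  inh : ∀ w, Nonempty (dom w)
  emb : ∀ {a b}, le a b → dom a → dom b
  emb_refl : ∀ (w) (x : dom w), emb (le_refl w) x = x
  emb_trans : ∀ {a b c} (h₁ : le a b) (h₂ : le b c) (x : dom a),
      emb (le_trans h₁ h₂) x = emb h₂ (emb h₁ x)
  emb_inj : ∀ {a b} (h : le a b), Function.Injective (emb h)
  interpF : ∀ (w) {n : ℕ}, σ.Func n → (Fin n → dom w) → dom w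
  interpR : ∀ (w) {n : ℕ}, σ.Rel n → (Fin n → dom w) → Prop
  interpF_emb : ∀ {a b} (h : le a b) {n : ℕ} (f : σ.Func n) (v : Fin n → dom a),
      emb h (interpF a f v) = interpF b f fun i => emb h (v i)
  interpR_emb : ∀ {a b} (h : le a b) {n : ℕ} (R : σ.Rel n) (v : Fin n → dom a),
      (interpR a R v ↔ interpR b R fun i => emb h (v i))
  cInt : ∀ w, C → dom w
  cInt_emb : ∀ {a b} (h : le a b) (c : C), emb h (cInt a c) = cInt b c

/-- Value of a term at a node, under a valuation. -/
def GTerm.val (K : GKripke σ C W le) (w : W) (v : ℕ → K.dom w) :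
    GTerm σ C → K.dom w
  | .var n => v n
  | .const c => K.cInt w c
  | .func f ts => K.interpF w f fun i => (ts i).val K w v

/-- Kripke forcing `w ⊩ φ [v]`. -/
def GKripke.force (K : GKripke σ C W le) :
    GFormula σ C → (w : W) → (ℕ → K.dom w) → Prop
  | .falsum, _, _ => False
  | .eq t u, w, v => t.val K w v = u.val K w v
  | .rel R ts, w, v => K.interpR w R fun i => (ts i).val K w v
  | .conj φ ψ, w, v => K.force φ w v ∧ K.force ψ w v
  | .disj φ ψ, w, v => K.force φ w v ∨ K.force ψ w v
  | .impl φ ψ, w, v => ∀ w' (h : le w w'),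
      K.force φ w' (fun n => K.emb h (v n)) → K.force ψ w' (fun n => K.emb h (v n))
  | .all φ, w, v => ∀ w' (h : le w w') (a : K.dom w'),
      K.force φ w' (vcons a fun n => K.emb h (v n))
  | .ex φ, w, v => ∃ a, K.force φ w (vcons a v)

/-- Pulling a Kripke model back along a monotone map of frames: the node `x`
carries the classical structure of the node `f x`. -/
def GKripke.pullback {W' : Type} {le' : W' → W' → Prop} (K : GKripke σ C W le)
    (f : W' → W) (ne' : Nonempty W') (refl' : ∀ x, le' x x)
    (trans' : ∀ {a b c}, le' a b → le' b c → le' a c)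
    (anti' : ∀ {a b}, le' a b → le' b a → a = b)
    (hf : ∀ {a b}, le' a b → le (f a) (f b)) : GKripke σ C W' le' where
  ne := ne'
  le_refl := refl'
  le_trans := trans'
  le_antisymm := anti'
  dom x := K.dom (f x)
  inh x := K.inh (f x)
  emb := fun {a b} h x => K.emb (hf h) x
  emb_refl := fun x a => K.emb_refl (f x) a
  emb_trans := fun {a b c} h₁ h₂ x => K.emb_trans (hf h₁) (hf h₂) x
  emb_inj := fun {a b} h => K.emb_inj (hf h)
  interpF := fun x {n} g v => K.interpF (f x) g v
  interpR := fun x {n} R v => K.interpR (f x) R v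
  interpF_emb := fun {a b} h {n} g v => K.interpF_emb (hf h) g v
  interpR_emb := fun {a b} h {n} R v => K.interpR_emb (hf h) R v
  cInt := fun x c => K.cInt (f x) c
  cInt_emb := fun {a b} h c => K.cInt_emb (hf h) c

section Spread

/-- Decode a binary string into a list of numbers: each maximal run of
`false`s terminated by a `true` contributes its length (plus carry `c`);
trailing `false`s are ignored. -/
def blocks : List Bool → ℕ → List ℕ
  | [], _ => []
  | false :: xs, c => blocks xs (c + 1)
  | true :: xs, c => c :: blocks xs 0

/-- Final counter after processing a string. -/
def tailc : List Bool → ℕ → ℕ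
  | [], c => c
  | false :: xs, c => tailc xs (c + 1)
  | true :: xs, _ => tailc xs 0

lemma blocks_append : ∀ (x y : List Bool) (c : ℕ),
    blocks (x ++ y) c = blocks x c ++ blocks y (tailc x c)
  | [], y, c => rfl
  | false :: xs, y, c => by
      simpa [blocks, tailc] using blocks_append xs y (c + 1)
  | true :: xs, y, c => by
      simpa [blocks, tailc] using blocks_append xs y 0

lemma blocks_replicate : ∀ (n c : ℕ),
    blocks (List.replicate n false ++ [true]) c = [c + n]
  | 0, c => by simp [blocks]
  | n + 1, c => by
      have := blocks_replicate n (c + 1)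
      simpa [List.replicate_succ, blocks, Nat.add_assoc, Nat.add_comm,
        Nat.add_left_comm] using this

variable {W : Type}

open Classical in
/-- Walk from `w` along a list of instructions: at instruction `n`, move to
`e n` when the order allows it, otherwise stay put. -/
noncomputable def walk (le : W → W → Prop) (e : ℕ → W) : W → List ℕ → W
  | w, [] => w
  | w, n :: ns => walk le e (if le w (e n) then e n else w) ns

lemma walk_append (le : W → W → Prop) (e : ℕ → W) :
    ∀ (l₁ l₂ : List ℕ) (w : W),
      walk le e w (l₁ ++ l₂) = walk le e (walk le e w l₁) l₂
  | [], l₂, w => rfl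
  | n :: ns, l₂, w => by
      simp only [List.cons_append, walk]
      exact walk_append le e ns l₂ _

lemma le_walk (le : W → W → Prop) (e : ℕ → W)
    (hrefl : ∀ w, le w w) (htrans : ∀ {a b c}, le a b → le b c → le a c) :
    ∀ (l : List ℕ) (w : W), le w (walk le e w l)
  | [], w => hrefl w
  | n :: ns, w => by
      simp only [walk]
      split_ifs with h
      · exact htrans h (le_walk le e hrefl htrans ns _)
      · exact le_walk le e hrefl htrans ns _

lemma walk_single (le : W → W → Prop) (e : ℕ → W) (w : W) (n : ℕ)
    (h : le w (e n)) : walk le e w [n] = e n := by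
  classical
  simp [walk, h]

end Spread

section Pullback

variable {σ : Lang} {C : Type} {W : Type} {le : W → W → Prop}
variable {W' : Type} {le' : W' → W' → Prop}

lemma val_pullback (K : GKripke σ C W le) (f : W' → W)
    (ne' : Nonempty W') (refl' : ∀ x, le' x x)
    (trans' : ∀ {a b c}, le' a b → le' b c → le' a c)
    (anti' : ∀ {a b}, le' a b → le' b a → a = b)
    (hfun : ∀ {a b}, le' a b → le (f a) (f b))
    (t : GTerm σ C) (x : W') (v : ℕ → K.dom (f x)) :
    GTerm.val (K.pullback f ne' refl' trans' anti' hfun) x v t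
      = t.val K (f x) v := by
  induction t with
  | var n => rfl
  | const c => rfl
  | func g ts ih =>
      show K.interpF (f x) g _ = K.interpF (f x) g _
      exact congrArg _ (funext fun i => ih i)

lemma force_pullback (K : GKripke σ C W le) (f : List Bool → W)
    (ne' : Nonempty (List Bool)) (refl' : ∀ x : List Bool, x <+: x)
    (trans' : ∀ {a b c : List Bool}, a <+: b → b <+: c → a <+: c)
    (anti' : ∀ {a b : List Bool}, a <+: b → b <+: a → a = b)
    (hfun : ∀ {a b : List Bool}, a <+: b → le (f a) (f b))
    (hlift : ∀ (x : List Bool) (w' : W), le (f x) w' → ∃ y, x <+: y ∧ f y = w') :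
    ∀ (φ : GFormula σ C) (x : List Bool) (v : ℕ → K.dom (f x)),
      (K.pullback f ne' refl' trans' anti' hfun).force φ x v
        ↔ K.force φ (f x) v := by
  intro φ
  induction φ with
  | falsum => intro x v; exact Iff.rfl
  | eq t u =>
      intro x v
      simp only [GKripke.force, val_pullback]
      exact Iff.rfl
  | rel R ts =>
      intro x v
      simp only [GKripke.force, val_pullback]
      exact Iff.rfl
  | conj φ ψ ih₁ ih₂ =>
      intro x v
      exact and_congr (ih₁ x v) (ih₂ x v)
  | disj φ ψ ih₁ ih₂ =>
      intro x v
      exact or_congr (ih₁ x v) (ih₂ x v)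
  | impl φ ψ ih₁ ih₂ =>
      intro x v
      constructor
      · intro h w' hle hφ
        obtain ⟨y, hxy, rfl⟩ := hlift x w' hle
        exact (ih₂ y _).mp (h y hxy ((ih₁ y _).mpr hφ))
      · intro h y hxy hφ
        exact (ih₂ y _).mpr (h (f y) (hfun hxy) ((ih₁ y _).mp hφ))
  | all φ ih =>
      intro x v
      constructor
      · intro h w' hle a
        obtain ⟨y, hxy, rfl⟩ := hlift x w' hle
        exact (ih y _).mp (h y hxy a)
      · intro h y hxy a
        exact (ih y _).mpr (h (f y) (hfun hxy) a)
  | ex φ ih =>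
      intro x v
      exact exists_congr fun a => ih x (vcons a v)

end Pullback

/-- Every countable rooted Kripke model `K` (in any language σ,
with parameters/constants) can be spread onto the full infinite binary tree
`(Γ*, ⪯)` of finite binary strings ordered by the prefix relation: there is an
onto map `f : Γ* → K` such that the pullback `K'` (a Kripke model on `(Γ*, ⪯)`
whose structure at `x` is the structure of `K` at `f x`) forces, at each node
`x` and for each formula `φ` with parameters from the structure at `f x`,
exactly what `K` forces at `f x`. -/
theorem stmt18 (σ : Lang) (C W : Type) (le : W → W → Prop)
    (K : GKripke σ C W le) (r : W) (hroot : ∀ w, le r w)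
    (hcW : Countable W) (hcD : ∀ w, Countable (K.dom w)) :
    ∃ f : List Bool → W, Function.Surjective f ∧
      ∃ hf : ∀ {a b : List Bool}, a <+: b → le (f a) (f b),
        ∀ (x : List Bool) (φ : GFormula σ C) (v : ℕ → K.dom (f x)),
          ((K.pullback f ⟨[]⟩ (fun l => List.prefix_refl l)
              (fun h₁ h₂ => h₁.trans h₂)
              (fun h₁ h₂ => h₁.eq_of_length (le_antisymm h₁.length_le h₂.length_le))
              (fun h => hf h)).force φ x v ↔ K.force φ (f x) v) := by
  haveI : Nonempty W := ⟨r⟩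
  obtain ⟨e₀, he₀⟩ := exists_surjective_nat W
  set e : ℕ → W := fun n => e₀ (Nat.unpair n).1 with he
  set f : List Bool → W := fun x => walk le e r (blocks x 0) with hfdef
  have hf : ∀ {a b : List Bool}, a <+: b → le (f a) (f b) := by
    intro a b hab
    obtain ⟨z, rfl⟩ := hab
    show le (walk le e r (blocks a 0)) (walk le e r (blocks (a ++ z) 0))
    rw [blocks_append, walk_append]
    exact le_walk le e K.le_refl K.le_trans _ _
  have hsurj : Function.Surjective f := by
    intro w
    obtain ⟨a, ha⟩ := he₀ w
    refine ⟨List.replicate (Nat.pair a 0) false ++ [true], ?_⟩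
    show walk le e r (blocks _ 0) = w
    rw [blocks_replicate, Nat.zero_add]
    have he' : e (Nat.pair a 0) = w := by simp [he, Nat.unpair_pair, ha]
    rw [walk_single le e r _ (he' ▸ hroot w)]
    exact he'
  have hlift : ∀ (x : List Bool) (w' : W), le (f x) w' → ∃ y, x <+: y ∧ f y = w' := by
    intro x w' hle
    obtain ⟨a, ha⟩ := he₀ w'
    set m := tailc x 0 with hm
    set n := Nat.pair a m with hn
    have hmn : m ≤ n := Nat.right_le_pair a m
    refine ⟨x ++ (List.replicate (n - m) false ++ [true]), ⟨_, rfl⟩, ?_⟩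
    show walk le e r (blocks _ 0) = w'
    rw [blocks_append, blocks_replicate, walk_append]
    have hen : e n = w' := by simp [he, hn, Nat.unpair_pair, ha]
    have hmm : m + (n - m) = n := by omega
    rw [hm, hmm]
    have hle' : le (walk le e r (blocks x 0)) (e n) := hen ▸ hle
    rw [walk_single le e _ n hle', hen]
  exact ⟨f, hsurj, hf, fun x φ v => force_pullback K f _ _ _ _ _ hlift φ x v⟩


end Pap18
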